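/- arXiv:1609.07710 — 3 statements merged into one kernel-verified Lean document; each statement's English description precedes it below -/
import Mathlib

section
/- For fixed λ > 0 and ρ > 0, the map q ↦ λ₀(q) is a continuous strictly increasing bijection from (0,∞) onto the interval (0, λ·(1 − e^{−ρ/λ})); in particular, λ₀(q) → 0 as q → 0⁺ and, for every target value t with 0 < t < λ·(1 − e^{−ρ/λ}), there exists a unique q* > 0 with λ₀(q*) = t (so the bisection search for q* in Proposition 1 has a unique solution). -/
open Filter Real Set

namespace Lambda0Aux

variable (c : ℝ)

/-- The exponent function `g q = q * (log (q+c) - log q)`. -/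
noncomputable def g (q : ℝ) : ℝ := q * (Real.log (q + c) - Real.log q)

variable {c}

lemma g_pos (hc : 0 < c) {q : ℝ} (hq : 0 < q) : 0 < g c q := by
  have h : Real.log q < Real.log (q + c) := Real.log_lt_log hq (by linarith)
  have : 0 < Real.log (q + c) - Real.log q := by linarith
  exact mul_pos hq this

lemma g_lt (hc : 0 < c) {q : ℝ} (hq : 0 < q) : g c q < c := by
  have hqc : 0 < q + c := by linarith
  have h1 : Real.log ((q + c) / q) < (q + c) / q - 1 :=
    Real.log_lt_sub_one_of_pos (by positivity)
      (by
        intro h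
        have := (div_eq_one_iff_eq hq.ne').mp h
        linarith)
  rw [Real.log_div hqc.ne' hq.ne'] at h1
  have h2 : (q + c) / q - 1 = c / q := by field_simp; ring
  rw [h2] at h1
  have := mul_lt_mul_of_pos_left h1 hq
  rw [mul_div_cancel₀ _ hq.ne'] at this
  exact this

lemma hasDerivAt_g (hc : 0 < c) {q : ℝ} (hq : 0 < q) :
    HasDerivAt (g c) (Real.log (q + c) - Real.log q - c / (q + c)) q := by
  have hqc : 0 < q + c := by linarith
  have h1 : HasDerivAt (fun x : ℝ => Real.log (x + c)) ((q + c)⁻¹) q := by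
    have := (Real.hasDerivAt_log hqc.ne').comp q ((hasDerivAt_id q).add_const c)
    rw [mul_one] at this
    exact this
  have h2 : HasDerivAt (fun x : ℝ => Real.log (x + c) - Real.log x)
      ((q + c)⁻¹ - q⁻¹) q := h1.sub (Real.hasDerivAt_log hq.ne')
  have h3 := (hasDerivAt_id q).mul h2
  have h4 : 1 * (Real.log (q + c) - Real.log q) + q * ((q + c)⁻¹ - q⁻¹)
      = Real.log (q + c) - Real.log q - c / (q + c) := by
    field_simp
    ring
  simp only [id] at h3
  rw [h4] at h3
  exact h3

lemma deriv_g_pos (hc : 0 < c) {q : ℝ} (hq : 0 < q) :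
    0 < Real.log (q + c) - Real.log q - c / (q + c) := by
  have hqc : 0 < q + c := by linarith
  have h1 : Real.log (q / (q + c)) < q / (q + c) - 1 :=
    Real.log_lt_sub_one_of_pos (by positivity)
      (by
        intro h
        have := (div_eq_one_iff_eq hqc.ne').mp h
        linarith)
  rw [Real.log_div hq.ne' hqc.ne'] at h1
  have h2 : q / (q + c) - 1 = -(c / (q + c)) := by field_simp; ring
  rw [h2] at h1
  linarith

lemma continuousOn_g (hc : 0 < c) : ContinuousOn (g c) (Set.Ioi 0) := by
  have h1 : ContinuousOn (fun q : ℝ => Real.log (q + c)) (Set.Ioi 0) := by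
    apply Real.continuousOn_log.comp (by fun_prop)
    intro x hx
    simp only [Set.mem_Ioi] at hx
    simp only [Set.mem_compl_iff, Set.mem_singleton_iff]
    positivity
  have h2 : ContinuousOn Real.log (Set.Ioi 0) :=
    Real.continuousOn_log.mono (by intro x hx; exact (ne_of_gt hx))
  exact continuousOn_id.mul (h1.sub h2)

lemma strictMonoOn_g (hc : 0 < c) : StrictMonoOn (g c) (Set.Ioi 0) := by
  apply strictMonoOn_of_deriv_pos (convex_Ioi 0) (continuousOn_g hc)
  intro x hx
  rw [interior_Ioi] at hx
  rw [(hasDerivAt_g hc hx).deriv]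
  exact deriv_g_pos hc hx

lemma tendsto_g_zero (hc : 0 < c) :
    Tendsto (g c) (nhdsWithin 0 (Set.Ioi 0)) (nhds 0) := by
  have h0 : Tendsto (g c) (nhds 0) (nhds 0) := by
    have h1 : Tendsto (fun q : ℝ => q * Real.log (q + c)) (nhds 0) (nhds 0) := by
      have : ContinuousAt (fun q : ℝ => q * Real.log (q + c)) 0 := by
        apply ContinuousAt.mul continuousAt_id
        exact (Real.continuousAt_log (by simpa using hc.ne')).comp (by fun_prop)
      simpa using this.tendsto
    have h2 : Tendsto (fun q : ℝ => q * Real.log q) (nhds 0) (nhds 0) := by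
      have := (Real.continuous_mul_log.tendsto 0)
      simpa using this
    have := h1.sub h2
    simp only [sub_zero] at this
    refine this.congr fun q => by simp [g]; ring
  exact h0.mono_left nhdsWithin_le_nhds

lemma tendsto_g_atTop (hc : 0 < c) : Tendsto (g c) atTop (nhds c) := by
  have h := Real.tendsto_mul_log_one_add_div_atTop c
  apply h.congr'
  filter_upwards [eventually_gt_atTop (0 : ℝ)] with q hq
  have hqc : (0 : ℝ) < q + c := by linarith
  simp only [g]
  rw [show 1 + c / q = (q + c) / q by field_simp,
    Real.log_div hqc.ne' hq.ne']

end Lambda0Aux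

/-- For fixed `lam > 0` and `ρ > 0`, the map `q ↦ λ₀(q) = lam * (1 - (1 + ρ/(q*lam)) ^ (-q))`
is a continuous strictly increasing bijection from `(0,∞)` onto `(0, lam * (1 - exp (-ρ/lam)))`;
moreover `λ₀(q) → 0` as `q → 0⁺`, and for every target `t` in that interval there is a unique
`q* > 0` with `λ₀(q*) = t` (uniqueness of the bisection solution in Proposition 1). -/
theorem lambda0_bijective_onto_interval (lam ρ : ℝ) (hlam : 0 < lam) (hρ : 0 < ρ) :
    ContinuousOn (fun q : ℝ => lam * (1 - (1 + ρ / (q * lam)) ^ (-q))) (Set.Ioi 0) ∧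
    StrictMonoOn (fun q : ℝ => lam * (1 - (1 + ρ / (q * lam)) ^ (-q))) (Set.Ioi 0) ∧
    Set.BijOn (fun q : ℝ => lam * (1 - (1 + ρ / (q * lam)) ^ (-q))) (Set.Ioi 0)
      (Set.Ioo 0 (lam * (1 - Real.exp (-(ρ / lam))))) ∧
    Tendsto (fun q : ℝ => lam * (1 - (1 + ρ / (q * lam)) ^ (-q)))
      (nhdsWithin 0 (Set.Ioi 0)) (nhds 0) ∧
    ∀ t : ℝ, 0 < t → t < lam * (1 - Real.exp (-(ρ / lam))) →
      ∃! q : ℝ, 0 < q ∧ lam * (1 - (1 + ρ / (q * lam)) ^ (-q)) = t := by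
  have hc : 0 < ρ / lam := div_pos hρ hlam
  set f : ℝ → ℝ := fun q : ℝ => lam * (1 - (1 + ρ / (q * lam)) ^ (-q)) with hf
  set F : ℝ → ℝ := fun q => lam * (1 - Real.exp (-(Lambda0Aux.g (ρ / lam) q))) with hF
  -- the two functions agree on `Ioi 0`
  have heq : Set.EqOn f F (Set.Ioi 0) := by
    intro q hq
    simp only [Set.mem_Ioi] at hq
    have hqc : 0 < q + ρ / lam := by positivity
    have h1 : 1 + ρ / (q * lam) = (q + ρ / lam) / q := by
      rw [add_div, div_self hq.ne', div_div, mul_comm]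
    have h2 : (Real.log (q + ρ / lam) - Real.log q) * (-q)
        = -(q * (Real.log (q + ρ / lam) - Real.log q)) := by ring
    simp only [hf, hF, Lambda0Aux.g]
    rw [h1, Real.rpow_def_of_pos (by positivity),
      Real.log_div hqc.ne' (ne_of_gt hq), h2]
  -- continuity
  have hFcont : ContinuousOn F (Set.Ioi 0) :=
    continuousOn_const.mul (continuousOn_const.sub
      (Real.continuous_exp.comp_continuousOn (Lambda0Aux.continuousOn_g hc).neg))
  have hcont : ContinuousOn f (Set.Ioi 0) := hFcont.congr heq
  -- strict monotonicity
  have hFmono : StrictMonoOn F (Set.Ioi 0) := by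
    intro a ha b hb hab
    have h1 := Lambda0Aux.strictMonoOn_g hc ha hb hab
    have h2 : Real.exp (-(Lambda0Aux.g (ρ / lam) b)) < Real.exp (-(Lambda0Aux.g (ρ / lam) a)) :=
      Real.exp_lt_exp.mpr (by linarith)
    exact mul_lt_mul_of_pos_left (by linarith) hlam
  have hmono : StrictMonoOn f (Set.Ioi 0) := by
    intro a ha b hb hab
    rw [heq ha, heq hb]
    exact hFmono ha hb hab
  -- maps to
  have hmaps : Set.MapsTo f (Set.Ioi 0)
      (Set.Ioo 0 (lam * (1 - Real.exp (-(ρ / lam))))) := by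
    intro q hq
    have hq' : 0 < q := hq
    rw [heq hq]
    constructor
    · have h1 : Real.exp (-(Lambda0Aux.g (ρ / lam) q)) < 1 :=
        Real.exp_lt_one_iff.mpr (by linarith [Lambda0Aux.g_pos hc hq'])
      exact mul_pos hlam (by linarith)
    · have h1 : Real.exp (-(ρ / lam)) < Real.exp (-(Lambda0Aux.g (ρ / lam) q)) :=
        Real.exp_lt_exp.mpr (by linarith [Lambda0Aux.g_lt hc hq'])
      exact mul_lt_mul_of_pos_left (by linarith) hlam
  -- limit at 0⁺
  have hF0 : Tendsto F (nhdsWithin 0 (Set.Ioi 0)) (nhds 0) := by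
    have h1 : Tendsto F (nhdsWithin 0 (Set.Ioi 0))
        (nhds (lam * (1 - Real.exp (-(0 : ℝ))))) :=
      tendsto_const_nhds.mul (tendsto_const_nhds.sub
        ((Real.continuous_exp.tendsto _).comp (Lambda0Aux.tendsto_g_zero hc).neg))
    simpa using h1
  have h0 : Tendsto f (nhdsWithin 0 (Set.Ioi 0)) (nhds 0) := by
    apply hF0.congr'
    filter_upwards [self_mem_nhdsWithin] with q hq
    exact (heq hq).symm
  -- limit at ∞
  have hFtop : Tendsto F atTop (nhds (lam * (1 - Real.exp (-(ρ / lam))))) :=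
    tendsto_const_nhds.mul (tendsto_const_nhds.sub
      ((Real.continuous_exp.tendsto _).comp (Lambda0Aux.tendsto_g_atTop hc).neg))
  -- surjectivity
  have hsurj : Set.SurjOn f (Set.Ioi 0)
      (Set.Ioo 0 (lam * (1 - Real.exp (-(ρ / lam))))) := by
    intro t ht
    obtain ⟨ht0, htL⟩ := ht
    obtain ⟨a, haf, ha⟩ :=
      ((h0.eventually_lt_const ht0).and self_mem_nhdsWithin).exists
    have ha' : 0 < a := ha
    obtain ⟨b, hbf, hb⟩ :=
      ((hFtop.eventually_const_lt htL).and (eventually_gt_atTop a)).exists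
    have hFb : t < f b := by rw [heq (by simp only [Set.mem_Ioi]; linarith : b ∈ Set.Ioi (0:ℝ))]; exact hbf
    have hsub : Set.Icc a b ⊆ Set.Ioi 0 := fun x hx => lt_of_lt_of_le ha' hx.1
    obtain ⟨q, hqmem, hqt⟩ :=
      intermediate_value_Icc (le_of_lt hb) (hcont.mono hsub)
        ⟨le_of_lt haf, le_of_lt hFb⟩
    exact ⟨q, hsub hqmem, hqt⟩
  have hinj : Set.InjOn f (Set.Ioi 0) := hmono.injOn
  refine ⟨hcont, hmono, ⟨hmaps, hinj, hsurj⟩, h0, ?_⟩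
  intro t ht0 htL
  obtain ⟨q, hq, hqt⟩ := hsurj ⟨ht0, htL⟩
  refine ⟨q, ⟨hq, hqt⟩, ?_⟩
  rintro r ⟨hr, hrt⟩
  exact hinj hr hq (hrt.trans hqt.symm)
end

section
/- For fixed ρ > 0 and q > 0, the approximate active-BS density is strictly increasing in the BS density: the map λ ↦ λ·[1 − (1 + ρ/(qλ))^{−q}] is strictly increasing on (0,∞), i.e., denser deployments activate strictly more BSs per unit area. -/
open Real

/-- Key inequality: for `t > 0`, `q > 0`,
`(1+t)^(-q) + q*t*(1+t)^(-q-1) < 1`. -/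
lemma key_ineq (q t : ℝ) (hq : 0 < q) (ht : 0 < t) :
    (1 + t) ^ (-q) + q * t * (1 + t) ^ (-q - 1) < 1 := by
  have hB : (0:ℝ) < 1 + t := by linarith
  have bern : 1 + (q + 1) * t < (1 + t) ^ (q + 1) :=
    one_add_mul_self_lt_rpow_one_add (by linarith) ht.ne' (by linarith)
  have hsplit : (1 + t) ^ (-q) = (1 + t) * (1 + t) ^ (-q - 1) := by
    have h1 : (1 + t) ^ (-q - 1 + 1) = (1 + t) ^ (-q - 1) * (1 + t) := by
      rw [Real.rpow_add hB, Real.rpow_one]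
    have h2 : (-q - 1 + 1 : ℝ) = -q := by ring
    rw [h2] at h1
    rw [h1]; ring
  have hfac : (1 + t) ^ (-q) + q * t * (1 + t) ^ (-q - 1)
      = (1 + (q + 1) * t) * (1 + t) ^ (-(q + 1)) := by
    rw [hsplit]
    have : -(q + 1) = -q - 1 := by ring
    rw [this]; ring
  rw [hfac, Real.rpow_neg hB.le]
  rw [mul_inv_lt_iff₀ (Real.rpow_pos_of_pos hB _), one_mul]
  exact bern

/-- For fixed UE density `ρ > 0` and `q > 0`, the approximate active-BS density
`lam ↦ lam * (1 - (1 + ρ/(q*lam)) ^ (-q))` is strictly increasing in the BS density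
`lam` on `(0,∞)`. -/
theorem lambda0_strictMono_in_BS_density (ρ q : ℝ) (hρ : 0 < ρ) (hq : 0 < q) :
    StrictMonoOn (fun lam : ℝ => lam * (1 - (1 + ρ / (q * lam)) ^ (-q))) (Set.Ioi 0) := by
  have hderiv : ∀ x : ℝ, 0 < x →
      HasDerivAt (fun lam : ℝ => lam * (1 - (1 + ρ / (q * lam)) ^ (-q)))
        (1 - ((1 + ρ / (q * x)) ^ (-q) + q * (ρ / (q * x)) * (1 + ρ / (q * x)) ^ (-q - 1))) x := by
    intro x hx
    have hB : (0:ℝ) < 1 + ρ / (q * x) := by positivity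
    have hinner : HasDerivAt (fun l : ℝ => 1 + ρ / (q * l)) ((ρ / q) * -(x ^ 2)⁻¹) x := by
      have h := ((hasDerivAt_inv hx.ne').const_mul (ρ / q)).const_add 1
      rw [show (fun l : ℝ => 1 + ρ / q * l⁻¹) = fun l : ℝ => 1 + ρ / (q * l) from
        funext fun l => by rw [← div_div, div_eq_mul_inv]; ring] at h
      exact h
    have hpow := hinner.rpow_const (p := -q) (Or.inl hB.ne')
    have hf := (hasDerivAt_id x).mul ((hasDerivAt_const x (1:ℝ)).sub hpow)
    convert hf using 1
    · rfl
    · rfl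
    · rfl
    simp only [id, Pi.sub_apply]
    have hBq : (1 + ρ / (q * x)) ^ (-q - 1) = (1 + ρ / (q * x)) ^ (-q - 1) := rfl
    field_simp
    ring
  have hpos : ∀ x ∈ interior (Set.Ioi (0:ℝ)),
      0 < deriv (fun lam : ℝ => lam * (1 - (1 + ρ / (q * lam)) ^ (-q))) x := by
    intro x hx
    rw [interior_Ioi] at hx
    have hx' : (0:ℝ) < x := hx
    rw [(hderiv x hx').deriv]
    have ht : 0 < ρ / (q * x) := by positivity
    have := key_ineq q (ρ / (q * x)) hq ht
    linarith
  have hcont : ContinuousOn (fun lam : ℝ => lam * (1 - (1 + ρ / (q * lam)) ^ (-q)))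
      (Set.Ioi 0) := fun x hx =>
    ((hderiv x hx).continuousAt).continuousWithinAt
  exact strictMonoOn_of_deriv_pos (convex_Ioi 0) hcont hpos
end

section
/- Let λ > 0, let Pr^L : (0,∞) → [0,1] be continuous, and let φ : (0,∞) → (0,∞) be a strictly increasing continuously differentiable bijection with inverse ψ. Define Λ^L(r) = 2πλ ∫₀^r Pr^L(u)·u du, Λ^NL(r) = 2πλ ∫₀^r (1 − Pr^L(u))·u du, and the association-distance densities f^L(r) = exp(−Λ^NL(φ(r)) − Λ^L(r))·Pr^L(r)·2πλr and f^NL(r) = exp(−Λ^L(ψ(r)) − Λ^NL(r))·(1 − Pr^L(r))·2πλr. If Λ^L(r) + Λ^NL(φ(r)) → ∞ as r → ∞, then ∫₀^∞ f^L(r) dr + ∫₀^∞ f^NL(r) dr = 1; i.e., F_R(+∞) = F_R^L(+∞) + F_R^NL(+∞) = 1, so F_R is the CDF of the UE association distance. -/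
open MeasureTheory Filter Set Topology


-- integrability of the intensity integrand
lemma lamAux_integrableOn (g : ℝ → ℝ) (hgc : ContinuousOn g (Set.Ioi 0))
    (hg0 : ∀ u : ℝ, 0 < u → 0 ≤ g u) (hg1 : ∀ u : ℝ, 0 < u → g u ≤ 1) (x : ℝ) :
    IntegrableOn (fun u => g u * u) (Set.Ioc 0 x) := by
  refine ⟨((hgc.mono Set.Ioc_subset_Ioi_self).mul (continuousOn_id)).aestronglyMeasurable
    measurableSet_Ioc, ?_⟩
  refine HasFiniteIntegral.restrict_of_bounded (C := |x|) measure_Ioc_lt_top ?_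
  refine (ae_restrict_iff' measurableSet_Ioc).2 (Filter.Eventually.of_forall fun u hu => ?_)
  have hu0 : 0 < u := hu.1
  have : ‖g u * u‖ = g u * u := by
    rw [Real.norm_eq_abs, abs_of_nonneg (mul_nonneg (hg0 u hu0) hu0.le)]
  rw [this]
  calc g u * u ≤ 1 * u := by
        exact mul_le_mul_of_nonneg_right (hg1 u hu0) hu0.le
    _ = u := one_mul u
    _ ≤ x := hu.2
    _ ≤ |x| := le_abs_self x

-- derivative of the intensity function
lemma lamAux_hasDerivAt (c : ℝ) (g : ℝ → ℝ) (hgc : ContinuousOn g (Set.Ioi 0))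
    (hg0 : ∀ u : ℝ, 0 < u → 0 ≤ g u) (hg1 : ∀ u : ℝ, 0 < u → g u ≤ 1)
    (Λ : ℝ → ℝ) (hΛ : ∀ r : ℝ, Λ r = c * ∫ u in Set.Ioc 0 r, g u * u)
    (x : ℝ) (hx : 0 < x) : HasDerivAt Λ (c * (g x * x)) x := by
  have hint : IntervalIntegrable (fun u => g u * u) volume 0 x := by
    rw [intervalIntegrable_iff_integrableOn_Ioc_of_le hx.le]
    exact lamAux_integrableOn g hgc hg0 hg1 x
  have hgc' : ContinuousOn (fun u => g u * u) (Set.Ioi 0) := hgc.mul continuousOn_id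
  have hmeas : StronglyMeasurableAtFilter (fun u => g u * u) (𝓝 x) volume :=
    hgc'.stronglyMeasurableAtFilter isOpen_Ioi x hx
  have hcx : ContinuousAt (fun u => g u * u) x :=
    hgc'.continuousAt (isOpen_Ioi.mem_nhds hx)
  have hFTC : HasDerivAt (fun r => ∫ u in (0:ℝ)..r, g u * u) (g x * x) x :=
    intervalIntegral.integral_hasDerivAt_right hint hmeas hcx
  have := hFTC.const_mul c
  refine this.congr_of_eventuallyEq ?_
  filter_upwards [isOpen_Ioi.mem_nhds hx] with r (hr : 0 < r)
  rw [hΛ r, intervalIntegral.integral_of_le hr.le]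

-- nonnegativity and tendsto 0
lemma lamAux_nonneg (c : ℝ) (hc : 0 ≤ c) (g : ℝ → ℝ)
    (hg0 : ∀ u : ℝ, 0 < u → 0 ≤ g u)
    (Λ : ℝ → ℝ) (hΛ : ∀ r : ℝ, Λ r = c * ∫ u in Set.Ioc 0 r, g u * u)
    (r : ℝ) : 0 ≤ Λ r := by
  rw [hΛ r]
  refine mul_nonneg hc (setIntegral_nonneg measurableSet_Ioc fun u hu => ?_)
  exact mul_nonneg (hg0 u hu.1) hu.1.le

lemma lamAux_tendsto_zero (c : ℝ) (g : ℝ → ℝ)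
    (hg0 : ∀ u : ℝ, 0 < u → 0 ≤ g u) (hg1 : ∀ u : ℝ, 0 < u → g u ≤ 1)
    (Λ : ℝ → ℝ) (hΛ : ∀ r : ℝ, Λ r = c * ∫ u in Set.Ioc 0 r, g u * u) :
    Tendsto Λ (𝓝[>] (0:ℝ)) (𝓝 0) := by
  have hbound : ∀ r : ℝ, 0 < r → ‖Λ r‖ ≤ |c| * (r * r) := by
    intro r hr
    rw [hΛ r, norm_mul, Real.norm_eq_abs]
    refine mul_le_mul_of_nonneg_left ?_ (abs_nonneg c)
    have := norm_setIntegral_le_of_norm_le_const (μ := volume)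
      (f := fun u => g u * u) (s := Set.Ioc 0 r) (C := r) measure_Ioc_lt_top
      (fun u hu => ?_)
    · calc ‖∫ u in Set.Ioc 0 r, g u * u‖ ≤ r * (volume (Set.Ioc 0 r)).toReal := this
        _ = r * r := by rw [Real.volume_Ioc, sub_zero, ENNReal.toReal_ofReal hr.le]
        _ ≤ r * r := le_refl _
    · have hu0 : 0 < u := hu.1
      rw [Real.norm_eq_abs, abs_of_nonneg (mul_nonneg (hg0 u hu0) hu0.le)]
      calc g u * u ≤ 1 * u := mul_le_mul_of_nonneg_right (hg1 u hu0) hu0.le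
        _ = u := one_mul u
        _ ≤ r := hu.2
  have h0 : Tendsto (fun r : ℝ => |c| * (r * r)) (𝓝[>] (0:ℝ)) (𝓝 0) := by
    have : Tendsto (fun r : ℝ => |c| * (r * r)) (𝓝 (0:ℝ)) (𝓝 (|c| * (0 * 0))) := by
      exact (tendsto_id.mul tendsto_id).const_mul _
    simpa using this.mono_left nhdsWithin_le_nhds
  refine squeeze_zero_norm' ?_ h0
  filter_upwards [self_mem_nhdsWithin] with r (hr : 0 < r) using hbound r hr

lemma derivAux_nonneg {φ : ℝ → ℝ} (hφmono : StrictMonoOn φ (Set.Ioi 0))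
    {x d : ℝ} (hx : 0 < x) (h : HasDerivAt φ d x) : 0 ≤ d := by
  rw [hasDerivAt_iff_tendsto_slope] at h
  have h' : Tendsto (slope φ x) (𝓝[>] x) (𝓝 d) :=
    h.mono_left (nhdsWithin_mono x fun y hy => ne_of_gt hy)
  refine ge_of_tendsto h' ?_
  filter_upwards [self_mem_nhdsWithin] with y (hy : x < y)
  have h1 : φ x < φ y := hφmono hx (hx.trans hy) hy
  have h2 : (0:ℝ) < y - x := sub_pos.2 hy
  rw [slope_def_field]
  exact div_nonneg (sub_pos.2 h1).le h2.le

lemma phiAux_tendsto {φ : ℝ → ℝ} (hφpos : ∀ r : ℝ, 0 < r → 0 < φ r)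
    (hφmono : StrictMonoOn φ (Set.Ioi 0)) (hφbij : Set.BijOn φ (Set.Ioi 0) (Set.Ioi 0)) :
    Tendsto φ (𝓝[>] (0:ℝ)) (𝓝[>] (0:ℝ)) := by
  rw [tendsto_nhdsWithin_iff]
  constructor
  · rw [tendsto_order]
    constructor
    · intro a ha
      filter_upwards [self_mem_nhdsWithin] with r (hr : 0 < r)
      exact ha.trans (hφpos r hr)
    · intro b hb
      obtain ⟨x0, hx0, hφx0⟩ := hφbij.surjOn (a := b) hb
      filter_upwards [Ioo_mem_nhdsGT_of_mem ⟨le_refl 0, hx0⟩] with r hr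
      calc φ r < φ x0 := hφmono hr.1 hx0 hr.2
        _ = b := hφx0
  · filter_upwards [self_mem_nhdsWithin] with r (hr : 0 < r) using hφpos r hr


/-- Normalization of the association-distance distribution (smallest-path-loss association
with probabilistic LoS/NLoS transmissions): with `ΛL`, `ΛNL` the LoS/NLoS intensity measures
of the disk of radius `r`, `φ = r₁` and `ψ = r₂` the mutually inverse strictly increasing
equivalent-distance maps, and `fL`, `fNL` the LoS/NLoS association-distance densities, if
`ΛL r + ΛNL (φ r) → ∞` as `r → ∞` then `∫₀^∞ fL + ∫₀^∞ fNL = 1`, i.e. `F_R(+∞) = 1`. -/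
theorem association_distance_density_normalized
    (lam : ℝ) (hlam : 0 < lam)
    (PrL : ℝ → ℝ) (hPrLcont : ContinuousOn PrL (Set.Ioi 0))
    (hPrL0 : ∀ u : ℝ, 0 < u → 0 ≤ PrL u) (hPrL1 : ∀ u : ℝ, 0 < u → PrL u ≤ 1)
    (φ ψ : ℝ → ℝ)
    (hφpos : ∀ r : ℝ, 0 < r → 0 < φ r)
    (hφmono : StrictMonoOn φ (Set.Ioi 0))
    (hφdiff : ContDiffOn ℝ 1 φ (Set.Ioi 0))
    (hφbij : Set.BijOn φ (Set.Ioi 0) (Set.Ioi 0))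
    (hψφ : ∀ r : ℝ, 0 < r → ψ (φ r) = r)
    (hφψ : ∀ r : ℝ, 0 < r → φ (ψ r) = r)
    (ΛL ΛNL fL fNL : ℝ → ℝ)
    (hΛL : ∀ r : ℝ, ΛL r = 2 * Real.pi * lam * ∫ u in Set.Ioc 0 r, PrL u * u)
    (hΛNL : ∀ r : ℝ, ΛNL r = 2 * Real.pi * lam * ∫ u in Set.Ioc 0 r, (1 - PrL u) * u)
    (hfL : ∀ r : ℝ, fL r =
      Real.exp (-ΛNL (φ r) - ΛL r) * (PrL r * (2 * Real.pi * lam * r)))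
    (hfNL : ∀ r : ℝ, fNL r =
      Real.exp (-ΛL (ψ r) - ΛNL r) * ((1 - PrL r) * (2 * Real.pi * lam * r)))
    (hdiv : Tendsto (fun r : ℝ => ΛL r + ΛNL (φ r)) atTop atTop) :
    (∫ r in Set.Ioi (0 : ℝ), fL r) + (∫ r in Set.Ioi (0 : ℝ), fNL r) = 1 := by
  have hπ : 0 < Real.pi := Real.pi_pos
  set c : ℝ := 2 * Real.pi * lam with hcdef
  have hc : 0 < c := by positivity
  have hPrLc' : ContinuousOn (fun u => 1 - PrL u) (Set.Ioi 0) :=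
    continuousOn_const.sub hPrLcont
  have hg0' : ∀ u : ℝ, 0 < u → 0 ≤ 1 - PrL u := fun u hu => sub_nonneg.2 (hPrL1 u hu)
  have hg1' : ∀ u : ℝ, 0 < u → 1 - PrL u ≤ 1 := fun u hu => by linarith [hPrL0 u hu]
  have hΛLd : ∀ x : ℝ, 0 < x → HasDerivAt ΛL (c * (PrL x * x)) x :=
    fun x hx => lamAux_hasDerivAt c PrL hPrLcont hPrL0 hPrL1 ΛL hΛL x hx
  have hΛNLd : ∀ x : ℝ, 0 < x → HasDerivAt ΛNL (c * ((1 - PrL x) * x)) x :=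
    fun x hx => lamAux_hasDerivAt c _ hPrLc' hg0' hg1' ΛNL hΛNL x hx
  have hφd : ∀ x : ℝ, 0 < x → HasDerivAt φ (deriv φ x) x := fun x hx =>
    ((hφdiff.contDiffAt (isOpen_Ioi.mem_nhds hx)).differentiableAt one_ne_zero).hasDerivAt
  have hφ'nn : ∀ x : ℝ, 0 < x → 0 ≤ deriv φ x := fun x hx => derivAux_nonneg hφmono hx (hφd x hx)
  set H : ℝ → ℝ := fun r => if r ≤ 0 then 1 else Real.exp (-(ΛL r + ΛNL (φ r))) with hHdef
  set g : ℝ → ℝ := fun r => fL r + deriv φ r * fNL (φ r) with hgdef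
  have hHpos : ∀ r : ℝ, 0 < r → H r = Real.exp (-(ΛL r + ΛNL (φ r))) := fun r hr => by
    simp [hHdef, not_le.2 hr]
  have hH0 : H 0 = 1 := by simp [hHdef]
  -- values of g
  have hgval : ∀ x : ℝ, 0 < x → g x =
      Real.exp (-(ΛL x + ΛNL (φ x))) * (c * (PrL x * x) + c * ((1 - PrL (φ x)) * φ x) * deriv φ x) := by
    intro x hx
    simp only [hgdef]
    rw [hfL x, hfNL (φ x), hψφ x hx,
      show -ΛNL (φ x) - ΛL x = -(ΛL x + ΛNL (φ x)) by ring,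
      show -ΛL x - ΛNL (φ x) = -(ΛL x + ΛNL (φ x)) by ring]
    ring
  -- derivative of -H
  have hHderiv : ∀ x ∈ Set.Ioi (0:ℝ), HasDerivAt (fun r => -H r) (g x) x := by
    intro x hx
    have hx' : 0 < x := hx
    have hφx : 0 < φ x := hφpos x hx'
    have hinner : HasDerivAt (fun r => -(ΛL r + ΛNL (φ r)))
        (-(c * (PrL x * x) + c * ((1 - PrL (φ x)) * φ x) * deriv φ x)) x :=
      ((hΛLd x hx').add (HasDerivAt.comp x (hΛNLd (φ x) hφx) (hφd x hx'))).neg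
    have hexp : HasDerivAt (fun r => Real.exp (-(ΛL r + ΛNL (φ r))))
        (Real.exp (-(ΛL x + ΛNL (φ x))) *
          (-(c * (PrL x * x) + c * ((1 - PrL (φ x)) * φ x) * deriv φ x))) x := hinner.exp
    have hneg : HasDerivAt (fun r => -Real.exp (-(ΛL r + ΛNL (φ r)))) (g x) x := by
      have h2 := hexp.neg
      have : -(Real.exp (-(ΛL x + ΛNL (φ x))) *
          (-(c * (PrL x * x) + c * ((1 - PrL (φ x)) * φ x) * deriv φ x))) = g x := by
        rw [hgval x hx']; ring
      rwa [this] at h2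
    refine hneg.congr_of_eventuallyEq ?_
    filter_upwards [isOpen_Ioi.mem_nhds hx'] with r (hr : 0 < r)
    rw [hHpos r hr]
  -- nonnegativity of g
  have hgnn : ∀ x ∈ Set.Ioi (0:ℝ), 0 ≤ g x := by
    intro x hx
    have hx' : 0 < x := hx
    have hφx : 0 < φ x := hφpos x hx'
    have h1 : 0 ≤ fL x := by
      rw [hfL x]
      exact mul_nonneg (Real.exp_nonneg _)
        (mul_nonneg (hPrL0 x hx') (by positivity))
    have h2 : 0 ≤ fNL (φ x) := by
      rw [hfNL (φ x)]
      exact mul_nonneg (Real.exp_nonneg _)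
        (mul_nonneg (hg0' (φ x) hφx) (by positivity))
    exact add_nonneg h1 (mul_nonneg (hφ'nn x hx') h2)
  -- continuity of -H at 0 from the right
  have hΛL0 : Tendsto ΛL (𝓝[>] (0:ℝ)) (𝓝 0) :=
    lamAux_tendsto_zero c PrL hPrL0 hPrL1 ΛL hΛL
  have hΛNL0 : Tendsto (fun r : ℝ => ΛNL (φ r)) (𝓝[>] (0:ℝ)) (𝓝 0) :=
    (lamAux_tendsto_zero c _ hg0' hg1' ΛNL hΛNL).comp (phiAux_tendsto hφpos hφmono hφbij)
  have hHtend : Tendsto H (𝓝[Set.Ici 0] (0:ℝ)) (𝓝 1) := by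
    have hIci : Set.Ici (0:ℝ) = insert 0 (Set.Ioi 0) := by
      ext y; simp [le_iff_lt_or_eq, eq_comm, or_comm]
    rw [hIci, nhdsWithin_insert, tendsto_sup]
    constructor
    · have := tendsto_pure_nhds H 0
      rwa [hH0] at this
    · have hexp0 : Tendsto (fun r : ℝ => Real.exp (-(ΛL r + ΛNL (φ r)))) (𝓝[>] (0:ℝ)) (𝓝 1) := by
        have hsum : Tendsto (fun r : ℝ => -(ΛL r + ΛNL (φ r))) (𝓝[>] (0:ℝ)) (𝓝 (-(0+0))) :=
          (hΛL0.add hΛNL0).neg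
        have := (Real.continuous_exp.tendsto (-(0+0))).comp hsum
        simpa [Function.comp_def] using this
      refine hexp0.congr' ?_
      filter_upwards [self_mem_nhdsWithin] with r (hr : 0 < r)
      rw [hHpos r hr]
  have hHcont : ContinuousWithinAt (fun r => -H r) (Set.Ici 0) 0 := by
    have : Tendsto (fun r => -H r) (𝓝[Set.Ici 0] (0:ℝ)) (𝓝 (-1)) := hHtend.neg
    have h0 : -H 0 = -1 := by rw [hH0]
    rw [ContinuousWithinAt, h0]
    exact this
  -- limit at infinity
  have hHtop : Tendsto (fun r => -H r) atTop (𝓝 0) := by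
    have h1 : Tendsto (fun r : ℝ => Real.exp (-(ΛL r + ΛNL (φ r)))) atTop (𝓝 0) :=
      Real.tendsto_exp_atBot.comp (tendsto_neg_atTop_atBot.comp hdiv)
    have h2 : Tendsto H atTop (𝓝 0) := by
      refine h1.congr' ?_
      filter_upwards [Ioi_mem_atTop (0:ℝ)] with r (hr : 0 < r)
      rw [hHpos r hr]
    simpa using h2.neg
  -- the key integral identity
  have hgint : IntegrableOn g (Set.Ioi 0) :=
    integrableOn_Ioi_deriv_of_nonneg hHcont hHderiv hgnn hHtop
  have key : ∫ x in Set.Ioi (0:ℝ), g x = 1 := by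
    have := integral_Ioi_of_hasDerivAt_of_nonneg hHcont hHderiv hgnn hHtop
    rw [this, hH0]; ring
  -- continuity of the pieces
  have hΛLcont : ContinuousOn ΛL (Set.Ioi 0) := fun x hx =>
    (hΛLd x hx).continuousAt.continuousWithinAt
  have hΛNLcont : ContinuousOn ΛNL (Set.Ioi 0) := fun x hx =>
    (hΛNLd x hx).continuousAt.continuousWithinAt
  have hφcont : ContinuousOn φ (Set.Ioi 0) := hφdiff.continuousOn
  have hφmaps : Set.MapsTo φ (Set.Ioi 0) (Set.Ioi 0) := fun x hx => hφpos x hx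
  have hΛNLφcont : ContinuousOn (fun r => ΛNL (φ r)) (Set.Ioi 0) :=
    hΛNLcont.comp hφcont hφmaps
  have hPrLφcont : ContinuousOn (fun r => PrL (φ r)) (Set.Ioi 0) :=
    hPrLcont.comp hφcont hφmaps
  have hfLcont : ContinuousOn fL (Set.Ioi 0) := by
    have : ContinuousOn (fun r => Real.exp (-ΛNL (φ r) - ΛL r) * (PrL r * (c * r)))
        (Set.Ioi 0) := by
      exact (Real.continuous_exp.comp_continuousOn (hΛNLφcont.neg.sub hΛLcont)).mul
        (hPrLcont.mul (continuousOn_const.mul continuousOn_id))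
    exact this.congr fun r _ => hfL r
  have hfNLφcont : ContinuousOn (fun r => fNL (φ r)) (Set.Ioi 0) := by
    have : ContinuousOn (fun r => Real.exp (-ΛL r - ΛNL (φ r)) *
        ((1 - PrL (φ r)) * (c * φ r))) (Set.Ioi 0) := by
      exact (Real.continuous_exp.comp_continuousOn (hΛLcont.neg.sub hΛNLφcont)).mul
        ((continuousOn_const.sub hPrLφcont).mul (continuousOn_const.mul hφcont))
    refine this.congr fun r hr => ?_
    rw [hfNL (φ r), hψφ r hr]
  have hderφcont : ContinuousOn (deriv φ) (Set.Ioi 0) :=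
    hφdiff.continuousOn_deriv_of_isOpen isOpen_Ioi le_rfl
  -- integrability of the pieces
  have hfLint : IntegrableOn fL (Set.Ioi 0) := by
    refine hgint.mono' (hfLcont.aestronglyMeasurable measurableSet_Ioi) ?_
    refine (ae_restrict_iff' measurableSet_Ioi).2 (Filter.Eventually.of_forall fun x hx => ?_)
    have hx' : 0 < x := hx
    have h1 : 0 ≤ fL x := by
      rw [hfL x]
      exact mul_nonneg (Real.exp_nonneg _) (mul_nonneg (hPrL0 x hx') (by positivity))
    have hφx : 0 < φ x := hφpos x hx'
    have h2 : 0 ≤ fNL (φ x) := by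
      rw [hfNL (φ x)]
      exact mul_nonneg (Real.exp_nonneg _)
        (mul_nonneg (hg0' (φ x) hφx) (by positivity))
    rw [Real.norm_eq_abs, abs_of_nonneg h1]
    simp only [hgdef]
    nlinarith [mul_nonneg (hφ'nn x hx') h2]
  have hf2int : IntegrableOn (fun r => deriv φ r * fNL (φ r)) (Set.Ioi 0) := by
    have h : IntegrableOn (fun r => g r - fL r) (Set.Ioi 0) := hgint.sub hfLint
    refine MeasureTheory.IntegrableOn.congr_fun h (fun x _ => by simp only [hgdef]; ring)
      measurableSet_Ioi
  -- splitting the integral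
  have hsplit : ∫ x in Set.Ioi (0:ℝ), g x =
      (∫ x in Set.Ioi (0:ℝ), fL x) + ∫ x in Set.Ioi (0:ℝ), deriv φ x * fNL (φ x) := by
    simp only [hgdef]
    exact integral_add hfLint hf2int
  -- change of variables for the NLoS part
  have himg : φ '' Set.Ioi 0 = Set.Ioi 0 := hφbij.image_eq
  have hCoV : ∫ r in Set.Ioi (0:ℝ), fNL r =
      ∫ r in Set.Ioi (0:ℝ), deriv φ r * fNL (φ r) := by
    calc ∫ r in Set.Ioi (0:ℝ), fNL r = ∫ r in φ '' Set.Ioi 0, fNL r := by rw [himg]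
      _ = ∫ x in Set.Ioi (0:ℝ), |deriv φ x| • fNL (φ x) :=
          integral_image_eq_integral_abs_deriv_smul measurableSet_Ioi
            (fun x hx => (hφd x hx).hasDerivWithinAt) hφmono.injOn fNL
      _ = ∫ x in Set.Ioi (0:ℝ), deriv φ x * fNL (φ x) := by
          refine setIntegral_congr_fun measurableSet_Ioi fun x hx => ?_
          rw [smul_eq_mul, abs_of_nonneg (hφ'nn x hx)]
  rw [hCoV, ← hsplit, key]
end
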